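/- If D is a digraph with n vertices and a arcs, then ‖D_α‖_* ≤ √(n[(1-α)² a + α² Σ_{i=1}^n (d_i⁺)²]), with equality if and only if D is a discrete digraph, or α = 0 and D is a direct sum of directed cycles. -/

import Mathlib

open Matrix Real

/-- Adjacency matrix (over ℝ) of a digraph given by an arc relation on `Fin n`. -/
def adjMat {n : ℕ} (R : Fin n → Fin n → Prop) [DecidableRel R] :
    Matrix (Fin n) (Fin n) ℝ :=
  Matrix.of fun i j => if R i j then 1 else 0

/-- Outdegree of a vertex. -/
def outdeg {n : ℕ} (R : Fin n → Fin n → Prop) [DecidableRel R] (i : Fin n) : ℕ :=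
  (Finset.univ.filter fun j => R i j).card

/-- Indegree of a vertex. -/
def indeg {n : ℕ} (R : Fin n → Fin n → Prop) [DecidableRel R] (j : Fin n) : ℕ :=
  (Finset.univ.filter fun i => R i j).card

/-- The `A_α` matrix of a digraph: `α Δ⁺ + (1-α) A`. -/
noncomputable def Amat {n : ℕ} (α : ℝ) (R : Fin n → Fin n → Prop) [DecidableRel R] :
    Matrix (Fin n) (Fin n) ℝ :=
  α • Matrix.diagonal (fun i => (outdeg R i : ℝ)) + (1 - α) • adjMat R

/-- The singular values of a real square matrix `M`: the nonnegative square roots of the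
eigenvalues of `M Mᵀ` (`Mᴴ = Mᵀ` over ℝ). -/
noncomputable def singVals {m : Type*} [Fintype m] [DecidableEq m]
    (M : Matrix m m ℝ) (i : m) : ℝ :=
  Real.sqrt ((Matrix.isHermitian_mul_conjTranspose_self M).eigenvalues i)

/-- Trace norm: sum of the singular values. -/
noncomputable def traceNorm {m : Type*} [Fintype m] [DecidableEq m]
    (M : Matrix m m ℝ) : ℝ :=
  ∑ i, singVals M i

/-- Spectral norm: the largest singular value. -/
noncomputable def specNorm {m : Type*} [Fintype m] [DecidableEq m]
    (M : Matrix m m ℝ) : ℝ :=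
  ⨆ i, singVals M i

lemma trace_eq_sum_eig' {m : Type*} [Fintype m] [DecidableEq m]
    (A : Matrix m m ℝ) (hA : A.IsHermitian) : A.trace = ∑ i, hA.eigenvalues i := by
  conv_lhs => rw [hA.spectral_theorem]
  rw [Unitary.conjStarAlgAut_apply, Matrix.trace_mul_cycle, Unitary.coe_star_mul_self, Matrix.one_mul, Matrix.trace_diagonal]
  simp [RCLike.ofReal]

lemma eig_const_to_scalar' {m : Type*} [Fintype m] [DecidableEq m]
    (A : Matrix m m ℝ) (hA : A.IsHermitian) (c : ℝ) (h : ∀ i, hA.eigenvalues i = c) :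
    A = c • 1 := by
  have hst := hA.spectral_theorem
  rw [hst]
  have hd : Matrix.diagonal (RCLike.ofReal ∘ hA.eigenvalues) = (c • 1 : Matrix m m ℝ) := by
    ext i j
    by_cases hij : i = j <;>
      simp [Matrix.diagonal, Matrix.one_apply, hij, h, RCLike.ofReal]
  rw [hd, Unitary.conjStarAlgAut_apply, Matrix.mul_smul, Matrix.smul_mul, Matrix.mul_one]
  congr 1
  exact Unitary.coe_mul_star_self _

lemma scalar_to_eig_const' {m : Type*} [Fintype m] [DecidableEq m]
    (A : Matrix m m ℝ) (hA : A.IsHermitian) (c : ℝ) (h : A = c • 1) (i : m) :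
    hA.eigenvalues i = c := by
  have hv := hA.mulVec_eigenvectorBasis i
  have hv2 : A *ᵥ ⇑(hA.eigenvectorBasis i) = c • ⇑(hA.eigenvectorBasis i) := by
    have := congrArg (fun M : Matrix m m ℝ => M *ᵥ ⇑(hA.eigenvectorBasis i)) h
    simpa [Matrix.smul_mulVec, Matrix.one_mulVec] using this
  have heq := hv2.symm.trans hv
  have hne : ⇑(hA.eigenvectorBasis i) ≠ 0 := by
    have h0 := hA.eigenvectorBasis.orthonormal.ne_zero i
    intro hc
    exact h0 (by ext j; exact congrFun hc j)
  obtain ⟨j, hj⟩ : ∃ j, (hA.eigenvectorBasis i) j ≠ 0 := by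
    by_contra hc
    push_neg at hc
    exact hne (funext hc)
  have hvj := congrFun heq j
  simp only [Pi.smul_apply, smul_eq_mul] at hvj
  have hj' : (WithLp.equiv 2 (m → ℝ)) (hA.eigenvectorBasis i) j ≠ 0 := hj
  have h2 : (c - hA.eigenvalues i) * (WithLp.equiv 2 (m → ℝ)) (hA.eigenvectorBasis i) j = 0 := by
    show (c - hA.eigenvalues i) * (hA.eigenvectorBasis i) j = 0
    linear_combination hvj
  rcases mul_eq_zero.mp h2 with h3 | h3
  · linarith
  · exact absurd h3 hj'

lemma cs_ineq' {n : ℕ} (f : Fin n → ℝ) :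
    (∑ i, f i) ^ 2 ≤ n * ∑ i, f i ^ 2 ∧
      ((∑ i, f i) ^ 2 = n * ∑ i, f i ^ 2 ↔ ∀ i j, f i = f j) := by
  have key : ∑ i : Fin n, ∑ j : Fin n, (f i - f j) ^ 2
      = 2 * ((n : ℝ) * ∑ i, f i ^ 2) - 2 * (∑ i, f i) ^ 2 := by
    have h1 : ∀ i : Fin n, ∑ j : Fin n, (f i - f j) ^ 2
        = (n : ℝ) * f i ^ 2 - 2 * f i * (∑ j, f j) + ∑ j, f j ^ 2 := by
      intro i
      rw [Finset.sum_congr rfl (fun j _ => by ring :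
        ∀ j ∈ Finset.univ, (f i - f j) ^ 2 = f i ^ 2 - 2 * f i * f j + f j ^ 2)]
      rw [Finset.sum_add_distrib, Finset.sum_sub_distrib, Finset.sum_const,
        Finset.card_univ, Fintype.card_fin, ← Finset.mul_sum]
      ring
    rw [Finset.sum_congr rfl (fun i _ => h1 i), Finset.sum_add_distrib,
      Finset.sum_sub_distrib, Finset.sum_const, Finset.card_univ, Fintype.card_fin,
      ← Finset.mul_sum]
    have h2 : ∑ i : Fin n, 2 * f i * (∑ j, f j) = 2 * (∑ i, f i) ^ 2 := by
      rw [← Finset.sum_mul, show ∑ i : Fin n, 2 * f i = 2 * ∑ i, f i by rw [Finset.mul_sum]]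
      ring
    rw [h2]
    ring
  have hnn : (0:ℝ) ≤ ∑ i : Fin n, ∑ j : Fin n, (f i - f j) ^ 2 :=
    Finset.sum_nonneg fun i _ => Finset.sum_nonneg fun j _ => sq_nonneg _
  constructor
  · nlinarith [hnn, key]
  · constructor
    · intro he
      have hz : ∑ i : Fin n, ∑ j : Fin n, (f i - f j) ^ 2 = 0 := by
        rw [key]; linarith
      intro i j
      have h0 := (Finset.sum_eq_zero_iff_of_nonneg
        (fun i _ => Finset.sum_nonneg fun j _ => sq_nonneg _)).mp hz i (Finset.mem_univ i)
      have h0' := (Finset.sum_eq_zero_iff_of_nonneg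
        (fun j _ => sq_nonneg _)).mp h0 j (Finset.mem_univ j)
      have := sq_eq_zero_iff.mp h0'
      linarith
    · intro hc
      have hz : ∑ i : Fin n, ∑ j : Fin n, (f i - f j) ^ 2 = 0 :=
        Finset.sum_eq_zero fun i _ => Finset.sum_eq_zero fun j _ => by rw [hc i j]; ring
      rw [hz] at key
      linarith

lemma trace_mul_conjTranspose_self' {m : Type*} [Fintype m] [DecidableEq m]
    (M : Matrix m m ℝ) : (M * Mᴴ).trace = ∑ i, ∑ j, (M i j) ^ 2 := by
  simp [Matrix.trace, Matrix.diag, Matrix.mul_apply, Matrix.conjTranspose_apply, sq]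

/-- McClelland-type upper bound: `‖D_α‖_* ≤ √(n[(1-α)² a + α² Σ(d_i⁺)²])`, with equality iff
`D` is discrete, or `α = 0` and `D` is a direct sum of directed cycles (i.e. the arc relation
is the graph of a fixed-point-free permutation). -/
theorem stmt_16 (n : ℕ) (R : Fin n → Fin n → Prop) [DecidableRel R]
    (hirr : ∀ i, ¬ R i i) (α : ℝ) (hα0 : 0 ≤ α) (hα1 : α < 1)
    (a : ℕ) (ha : a = ∑ i, outdeg R i) :
    traceNorm (Amat α R) ≤
        Real.sqrt (n * ((1 - α) ^ 2 * a + α ^ 2 * ∑ i, ((outdeg R i : ℝ)) ^ 2)) ∧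
      (traceNorm (Amat α R) =
          Real.sqrt (n * ((1 - α) ^ 2 * a + α ^ 2 * ∑ i, ((outdeg R i : ℝ)) ^ 2)) ↔
        (∀ i j, ¬ R i j) ∨
        (α = 0 ∧ ∃ σ : Equiv.Perm (Fin n), (∀ i, σ i ≠ i) ∧ ∀ i j, R i j ↔ j = σ i)) := by
  classical
  set M := Amat α R with hM
  have hH := Matrix.isHermitian_mul_conjTranspose_self M
  set ev : Fin n → ℝ := hH.eigenvalues with hev
  have hev0 : ∀ i, 0 ≤ ev i := fun i =>
    (Matrix.posSemidef_self_mul_conjTranspose M).eigenvalues_nonneg i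
  have hs_def : ∀ i, singVals M i = Real.sqrt (ev i) := fun i => rfl
  have hs0 : ∀ i, 0 ≤ singVals M i := fun i => Real.sqrt_nonneg _
  have hssq : ∀ i, singVals M i ^ 2 = ev i := fun i => Real.sq_sqrt (hev0 i)
  -- entry lemmas
  have hMdiag : ∀ i, M i i = α * (outdeg R i : ℝ) := by
    intro i
    simp [hM, Amat, adjMat, Matrix.add_apply, Matrix.diagonal_apply_eq, hirr i]
  have hMoff : ∀ i j, i ≠ j → M i j = (1 - α) * (if R i j then 1 else 0) := by
    intro i j hij
    simp [hM, Amat, adjMat, Matrix.add_apply, Matrix.diagonal_apply_ne _ hij]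
  have hMnn : ∀ i j, 0 ≤ M i j := by
    intro i j
    by_cases hij : i = j
    · subst hij; rw [hMdiag]; positivity
    · rw [hMoff i j hij]
      by_cases hr : R i j <;> simp [hr] <;> linarith
  have hrow : ∀ i, ∑ j, M i j ^ 2
      = α ^ 2 * (outdeg R i : ℝ) ^ 2 + (1 - α) ^ 2 * (outdeg R i : ℝ) := by
    intro i
    have hsplit : ∀ j, M i j ^ 2 =
        (if j = i then (α * (outdeg R i : ℝ)) ^ 2 else 0)
          + (1 - α) ^ 2 * (if R i j then 1 else 0) := by
      intro j
      by_cases hij : j = i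
      · subst hij
        simp [hMdiag j, hirr j]
      · rw [hMoff i j (fun h => hij h.symm)]
        by_cases hr : R i j <;> simp [hr, hij] <;> ring
    rw [Finset.sum_congr rfl fun j _ => hsplit j, Finset.sum_add_distrib,
      Finset.sum_ite_eq' Finset.univ i]
    simp only [Finset.mem_univ, if_true, ← Finset.mul_sum]
    rw [Finset.sum_boole]
    have h' : (Finset.univ.filter fun j => R i j).card = outdeg R i := rfl
    rw [h']
    ring
  set T : ℝ := (1 - α) ^ 2 * a + α ^ 2 * ∑ i, ((outdeg R i : ℝ)) ^ 2 with hT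
  have hsumev : ∑ i, ev i = T := by
    rw [hev, ← trace_eq_sum_eig' _ hH, trace_mul_conjTranspose_self']
    rw [Finset.sum_congr rfl fun i _ => hrow i, Finset.sum_add_distrib]
    simp only [← Finset.mul_sum]
    have hacast : (a:ℝ) = ∑ i, (outdeg R i : ℝ) := by rw [ha]; push_cast; rfl
    rw [hT, hacast]
    ring
  have hT0 : 0 ≤ T := hsumev ▸ Finset.sum_nonneg fun i _ => hev0 i
  have hsum_sq : ∑ i, singVals M i ^ 2 = T := by
    rw [Finset.sum_congr rfl fun i _ => hssq i, hsumev]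
  obtain ⟨hcs, hcseq⟩ := cs_ineq' (fun i => singVals M i)
  have htn0 : 0 ≤ traceNorm M := Finset.sum_nonneg fun i _ => hs0 i
  have htn_def : traceNorm M = ∑ i, singVals M i := rfl
  have hnT0 : (0:ℝ) ≤ n * T := by positivity
  have hbound : traceNorm M ≤ Real.sqrt (n * T) := by
    rw [show Real.sqrt (n * T) = Real.sqrt ((n:ℝ) * T) from rfl]
    rw [← Real.sqrt_sq htn0]
    apply Real.sqrt_le_sqrt
    rw [htn_def]
    calc (∑ i, singVals M i) ^ 2 ≤ n * ∑ i, singVals M i ^ 2 := hcs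
      _ = n * T := by rw [hsum_sq]
  refine ⟨hbound, ?_⟩
  constructor
  · -- forward
    intro heq
    have h2 : (∑ i, singVals M i) ^ 2 = n * ∑ i, singVals M i ^ 2 := by
      have hsq : traceNorm M ^ 2 = n * T := by
        rw [heq, Real.sq_sqrt hnT0]
      rw [hsum_sq, ← hsq, htn_def]
    have hall := hcseq.mp h2
    have hevall : ∀ i j, ev i = ev j := by
      intro i j
      rw [← hssq i, ← hssq j, hall i j]
    by_cases hdisc : ∀ i j, ¬ R i j
    · exact Or.inl hdisc
    push_neg at hdisc
    obtain ⟨p, q, hpq⟩ := hdisc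
    set c := ev p with hc
    have hevc : ∀ i, ev i = c := fun i => hevall i p
    have hscal : M * Mᴴ = c • 1 := eig_const_to_scalar' _ hH c hevc
    have hHij : ∀ i j, (M * Mᴴ) i j = ∑ k, M i k * M j k := by
      intro i j
      simp [Matrix.mul_apply, Matrix.conjTranspose_apply]
    have hdiagc : ∀ i,
        α ^ 2 * (outdeg R i : ℝ) ^ 2 + (1 - α) ^ 2 * (outdeg R i : ℝ) = c := by
      intro i
      have h0 : (M * Mᴴ) i i = c := by rw [hscal]; simp [Matrix.one_apply]
      rw [hHij] at h0
      rw [← hrow i]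
      rw [← h0]
      exact Finset.sum_congr rfl fun k _ => (sq (M i k)).symm ▸ by ring
    have hoff : ∀ i j, i ≠ j → ∀ k, M i k * M j k = 0 := by
      intro i j hij k
      have h0 : ∑ k, M i k * M j k = 0 := by
        have h1 : (M * Mᴴ) i j = 0 := by rw [hscal]; simp [Matrix.one_apply, hij]
        rw [hHij] at h1
        exact h1
      exact (Finset.sum_eq_zero_iff_of_nonneg
        (fun k _ => mul_nonneg (hMnn i k) (hMnn j k))).mp h0 k (Finset.mem_univ k)
    have hdeq : ∀ i j, outdeg R i = outdeg R j := by
      intro i j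
      have hi := hdiagc i
      have hj := hdiagc j
      have hfac : ((outdeg R i : ℝ) - (outdeg R j : ℝ)) *
          (α ^ 2 * ((outdeg R i : ℝ) + (outdeg R j : ℝ)) + (1 - α) ^ 2) = 0 := by
        linear_combination hi - hj
      have hpos : 0 < α ^ 2 * ((outdeg R i : ℝ) + (outdeg R j : ℝ)) + (1 - α) ^ 2 := by
        have h1 : 0 < (1 - α) ^ 2 := pow_pos (by linarith) 2
        have h2 : 0 ≤ α ^ 2 * ((outdeg R i : ℝ) + (outdeg R j : ℝ)) := by positivity
        linarith
      rcases mul_eq_zero.mp hfac with h | h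
      · exact_mod_cast (by linarith : (outdeg R i : ℝ) = (outdeg R j : ℝ))
      · linarith
    have hdp : 1 ≤ outdeg R p := by
      apply Finset.card_pos.mpr
      exact ⟨q, by simp [hpq]⟩
    have hpq_ne : p ≠ q := fun h => hirr p (h ▸ hpq)
    have hα : α = 0 := by
      have h0 := hoff p q hpq_ne q
      rw [hMoff p q hpq_ne, hMdiag q] at h0
      simp only [hpq, if_true, mul_one] at h0
      have hdq : 1 ≤ outdeg R q := by rw [hdeq q p]; exact hdp
      rcases mul_eq_zero.mp h0 with h | h
      · linarith
      · rcases mul_eq_zero.mp h with h' | h'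
        · exact h'
        · exfalso
          have : (1:ℝ) ≤ (outdeg R q : ℝ) := by exact_mod_cast hdq
          linarith
    refine Or.inr ⟨hα, ?_⟩
    subst hα
    have hdisj : ∀ i j, i ≠ j → ∀ k, ¬(R i k ∧ R j k) := by
      rintro i j hij k ⟨h1, h2⟩
      have h0 := hoff i j hij k
      have hki : k ≠ i := fun h => hirr i (h ▸ h1)
      have hkj : k ≠ j := fun h => hirr j (h ▸ h2)
      rw [hMoff i k (Ne.symm hki), hMoff j k (Ne.symm hkj)] at h0
      simp [h1, h2] at h0
    set s : Fin n → Finset (Fin n) := fun i => Finset.univ.filter fun j => R i j with hsdef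
    have hsd : ∀ i, (s i).card = outdeg R p := fun i => hdeq i p
    have hdisj' : ∀ i ∈ (Finset.univ : Finset (Fin n)), ∀ j ∈ Finset.univ, i ≠ j →
        Disjoint (s i) (s j) := by
      intro i _ j _ hij
      rw [Finset.disjoint_left]
      intro k hki hkj
      simp only [hsdef, Finset.mem_filter, Finset.mem_univ, true_and] at hki hkj
      exact hdisj i j hij k ⟨hki, hkj⟩
    have hcount : n * outdeg R p ≤ n := by
      have h1 : (Finset.univ.biUnion s).card = ∑ i, (s i).card :=
        Finset.card_biUnion hdisj'
      have h2 : (Finset.univ.biUnion s).card ≤ n := by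
        calc (Finset.univ.biUnion s).card ≤ (Finset.univ : Finset (Fin n)).card :=
              Finset.card_le_univ _
          _ = n := by simp
      rw [Finset.sum_congr rfl fun i _ => hsd i, Finset.sum_const, Finset.card_univ,
        Fintype.card_fin, smul_eq_mul] at h1
      omega
    have hd1 : outdeg R p = 1 := by
      have hn : 0 < n := p.pos
      have : outdeg R p ≤ 1 := by
        by_contra hcon
        push_neg at hcon
        have : n * 2 ≤ n * outdeg R p := Nat.mul_le_mul_left n hcon
        omega
      omega
    have hcard1 : ∀ i, (s i).card = 1 := fun i => (hsd i).trans hd1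
    choose g hg using fun i => Finset.card_eq_one.mp (hcard1 i)
    have hRg : ∀ i j, R i j ↔ j = g i := by
      intro i j
      constructor
      · intro h
        have hmem : j ∈ s i := by simp [hsdef, h]
        rw [hg i] at hmem
        simpa using hmem
      · intro h
        subst h
        have hmem : g i ∈ s i := by rw [hg i]; simp
        simpa [hsdef] using hmem
    have hginj : Function.Injective g := by
      intro i j hij
      by_contra hne
      exact hdisj i j hne (g i) ⟨(hRg i (g i)).mpr rfl, (hRg j (g i)).mpr hij⟩
    refine ⟨Equiv.ofBijective g (Finite.injective_iff_bijective.mp hginj), ?_, ?_⟩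
    · intro i hi
      have : R i i := (hRg i i).mpr (by simpa using hi.symm)
      exact hirr i this
    · intro i j
      rw [hRg i j]
      rfl
  · -- backward
    rintro (hdisc | ⟨hα, σ, hσfix, hσ⟩)
    · have hdeg : ∀ i, outdeg R i = 0 := by
        intro i
        simp [outdeg, Finset.filter_false_of_mem fun j _ => hdisc i j]
      have ha0 : a = 0 := by rw [ha]; simp [hdeg]
      have hM0 : M = 0 := by
        ext i j
        by_cases hij : i = j
        · subst hij; rw [hMdiag]; simp [hdeg]
        · rw [hMoff i j hij]; simp [hdisc i j]
      have hscal : M * Mᴴ = (0:ℝ) • 1 := by rw [hM0]; simp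
      have hevz : ∀ i, ev i = 0 := fun i => scalar_to_eig_const' _ hH 0 hscal i
      have hlhs : traceNorm M = 0 := by
        rw [htn_def]
        exact Finset.sum_eq_zero fun i _ => by rw [hs_def, hevz]; simp
      have hTz : T = 0 := by
        rw [hT, ha0]
        simp [hdeg]
      rw [hlhs, hTz]
      simp
    · subst hα
      have hdeg : ∀ i, outdeg R i = 1 := by
        intro i
        have hfil : (Finset.univ.filter fun j => R i j) = {σ i} := by
          ext j
          simp [hσ i j]
        simp [outdeg, hfil]
      have hMperm : ∀ i j, M i j = if j = σ i then 1 else 0 := by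
        intro i j
        by_cases hij : i = j
        · subst hij
          rw [hMdiag]
          have : ¬ (i = σ i) := fun h => hσfix i h.symm
          simp [this]
        · rw [hMoff i j hij]
          simp [hσ i j]
      have hscal : M * Mᴴ = (1:ℝ) • 1 := by
        ext i j
        have : (M * Mᴴ) i j = ∑ k, M i k * M j k := by
          simp [Matrix.mul_apply, Matrix.conjTranspose_apply]
        rw [this]
        rw [Finset.sum_congr rfl fun k _ => by rw [hMperm i k, hMperm j k]]
        by_cases hij : i = j
        · subst hij
          simp [Matrix.one_apply]
        · have hσne : σ i ≠ σ j := fun h => hij (σ.injective h)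
          rw [Finset.sum_eq_zero]
          · simp [Matrix.one_apply, hij]
          · intro k _
            by_cases h1 : k = σ i <;> by_cases h2 : k = σ j <;>
              simp [h1, h2] at * <;> try tauto
      have hev1 : ∀ i, ev i = 1 := fun i => scalar_to_eig_const' _ hH 1 hscal i
      have hlhs : traceNorm M = n := by
        rw [htn_def]
        rw [Finset.sum_congr rfl fun i _ => by rw [hs_def, hev1 i, Real.sqrt_one]]
        simp
      have hTn : T = n := by
        rw [hT, ha]
        simp [hdeg]
      rw [hlhs, hTn]
      exact (Real.sqrt_mul_self (by positivity : (0:ℝ) ≤ (n:ℝ))).symm
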